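/- Let α ∈ (0,1/2) and v ∈ C^α([0,1], ℝ^d). Suppose the non-anticipating dyadic Riemann sums I_k(v,dv)(t) := Σ_{m=1}^{2^k} v((m−1)2^{-k}) ⊗ (v(m2^{-k}∧t) − v((m−1)2^{-k}∧t)) converge uniformly as k → ∞. Then the dyadic quadratic covariations [v,v]_k(t) := Σ_m (v(m2^{-k}∧t) − v((m−1)2^{-k}∧t)) ⊗ (v(m2^{-k}∧t) − v((m−1)2^{-k}∧t)) also converge uniformly, and the limit [v,v] satisfies v^i(t)v^j(t) − v^i(0)v^j(0) = I(v^i,dv^j)(t) + I(v^j,dv^i)(t) + [v^i,v^j](t) for all t and i,j. -/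

import Mathlib

noncomputable section
open Set Filter

/-- The non-anticipating dyadic Riemann sum
`I_k(v^i, dv^j)(t) = ∑_m v^i((m-1)2^{-k}) (v^j(m2^{-k}∧t) - v^j((m-1)2^{-k}∧t))`. -/
def riemannSum {d : ℕ} (v : ℝ → Fin d → ℝ) (i j : Fin d) (k : ℕ) (t : ℝ) : ℝ :=
  ∑ m ∈ Finset.range (2 ^ k),
    v ((m : ℝ) / 2 ^ k) i *
      (v (min (((m : ℝ) + 1) / 2 ^ k) t) j - v (min ((m : ℝ) / 2 ^ k) t) j)

/-- The `k`-th dyadic quadratic covariation of the components `v^i, v^j`. -/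
def qvar {d : ℕ} (v : ℝ → Fin d → ℝ) (i j : Fin d) (k : ℕ) (t : ℝ) : ℝ :=
  ∑ m ∈ Finset.range (2 ^ k),
    (v (min (((m : ℝ) + 1) / 2 ^ k) t) i - v (min ((m : ℝ) / 2 ^ k) t) i) *
      (v (min (((m : ℝ) + 1) / 2 ^ k) t) j - v (min ((m : ℝ) / 2 ^ k) t) j)

lemma tuo_self {β ι : Type*} [UniformSpace β] (g : ℝ → β) (p : Filter ι) (s : Set ℝ) :
    TendstoUniformlyOn (fun _ : ι => g) g p s := by
  intro u hu
  filter_upwards with k x hx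
  exact refl_mem_uniformity hu

lemma qvar_key {d : ℕ} (v : ℝ → Fin d → ℝ) (i j : Fin d) (k : ℕ) {t : ℝ}
    (ht : t ∈ Icc (0:ℝ) 1) :
    qvar v i j k t = (v t i * v t j - v 0 i * v 0 j)
      - riemannSum v i j k t - riemannSum v j i k t := by
  have hsum : riemannSum v i j k t + riemannSum v j i k t + qvar v i j k t
      = ∑ m ∈ Finset.range (2 ^ k),
        (v (min (((m:ℝ)+1)/2^k) t) i * v (min (((m:ℝ)+1)/2^k) t) j
         - v (min ((m:ℝ)/2^k) t) i * v (min ((m:ℝ)/2^k) t) j) := by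
    rw [riemannSum, riemannSum, qvar, ← Finset.sum_add_distrib, ← Finset.sum_add_distrib]
    apply Finset.sum_congr rfl
    intro m _
    rcases le_or_gt ((m:ℝ)/2^k) t with h | h
    · rw [min_eq_left h]; ring
    · have h2 : t ≤ ((m:ℝ)+1)/2^k := by
        refine h.le.trans ?_
        gcongr
        linarith
      rw [min_eq_right h.le, min_eq_right h2]
      ring
  have htel : ∑ m ∈ Finset.range (2 ^ k),
        (v (min (((m:ℝ)+1)/2^k) t) i * v (min (((m:ℝ)+1)/2^k) t) j
         - v (min ((m:ℝ)/2^k) t) i * v (min ((m:ℝ)/2^k) t) j)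
      = v t i * v t j - v 0 i * v 0 j := by
    have := Finset.sum_range_sub
      (fun n : ℕ => v (min ((n:ℝ)/2^k) t) i * v (min ((n:ℝ)/2^k) t) j) (2 ^ k)
    have hcast : ∀ m : ℕ, ((m:ℝ)+1) = ((m+1 : ℕ) : ℝ) := by intro m; push_cast; ring
    calc ∑ m ∈ Finset.range (2 ^ k),
        (v (min (((m:ℝ)+1)/2^k) t) i * v (min (((m:ℝ)+1)/2^k) t) j
         - v (min ((m:ℝ)/2^k) t) i * v (min ((m:ℝ)/2^k) t) j)
        = ∑ m ∈ Finset.range (2 ^ k),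
          ((fun n : ℕ => v (min ((n:ℝ)/2^k) t) i * v (min ((n:ℝ)/2^k) t) j) (m+1)
           - (fun n : ℕ => v (min ((n:ℝ)/2^k) t) i * v (min ((n:ℝ)/2^k) t) j) m) := by
          apply Finset.sum_congr rfl; intro m _; rw [hcast m]
      _ = v (min (((2^k : ℕ):ℝ)/2^k) t) i * v (min (((2^k : ℕ):ℝ)/2^k) t) j
          - v (min (((0:ℕ):ℝ)/2^k) t) i * v (min (((0:ℕ):ℝ)/2^k) t) j := this
      _ = v t i * v t j - v 0 i * v 0 j := by
          have h1 : ((2^k : ℕ):ℝ)/2^k = 1 := by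
            push_cast; field_simp
          rw [h1, Nat.cast_zero, zero_div, min_eq_right ht.2, min_eq_left ht.1]
  linarith [hsum, htel]

/-- If `v ∈ C^α([0,1],ℝ^d)`, `α ∈ (0,1/2)`, and the non-anticipating dyadic Riemann sums
`I_k(v^i,dv^j)` converge uniformly to `I(v^i,dv^j)`, then the dyadic quadratic covariations
`[v^i,v^j]_k` converge uniformly to a limit `[v^i,v^j]` satisfying
`v^i(t)v^j(t) - v^i(0)v^j(0) = I(v^i,dv^j)(t) + I(v^j,dv^i)(t) + [v^i,v^j](t)`. -/
theorem qvar_from_riemann_sums {d : ℕ} (α : ℝ) (hα0 : 0 < α) (hα : α < 1 / 2)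
    (v : ℝ → Fin d → ℝ) (K : ℝ)
    (hv : ∀ s ∈ Icc (0:ℝ) 1, ∀ t ∈ Icc (0:ℝ) 1, ‖v t - v s‖ ≤ K * |t - s| ^ α)
    (I : Fin d → Fin d → ℝ → ℝ)
    (hI : ∀ i j : Fin d,
      TendstoUniformlyOn (fun k => riemannSum v i j k) (I i j) atTop (Icc 0 1)) :
    ∃ Q : Fin d → Fin d → ℝ → ℝ,
      (∀ i j : Fin d, TendstoUniformlyOn (fun k => qvar v i j k) (Q i j) atTop (Icc 0 1)) ∧
      ∀ i j : Fin d, ∀ t ∈ Icc (0:ℝ) 1,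
        v t i * v t j - v 0 i * v 0 j = I i j t + I j i t + Q i j t := by
  refine ⟨fun i j t => v t i * v t j - v 0 i * v 0 j - I i j t - I j i t, ?_, ?_⟩
  · intro i j
    have h := (tuo_self (fun t => v t i * v t j - v 0 i * v 0 j) atTop
      (Icc (0:ℝ) 1)).sub ((hI i j).add (hI j i))
    refine (h.congr ?_).congr_right ?_
    · filter_upwards with k t ht
      have := qvar_key v i j k ht
      simp only [Pi.add_apply, Pi.sub_apply, Pi.neg_apply]
      linarith [this]
    · intro t ht
      simp only [Pi.sub_apply, Pi.add_apply]
      ring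
  · intro i j t ht; ring
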